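/- Let H be a Hilbert space with Riesz isomorphism I : H → H', let Φ : H → N be a surjective bounded linear operator onto a Hilbert space N with Riesz isomorphism I_N, and let η ∈ H'. Then the saddle point system: I u + Φ' λ = η, Φ u = 0 (where Φ' : N' → H' is the dual map and λ ∈ N') has a unique solution (u, λ), and u is the I-orthogonal projection onto ker(Φ) of the gradient I⁻¹ η; i.e., u satisfies ⟨η, w⟩ = ⟨I u, w⟩ for all w ∈ ker(Φ). -/

import Mathlib

/-- **Saddle point system for the projected gradient (Hilbert setting).** Let `H`, `N`
be Hilbert spaces (with Riesz isomorphisms realized by the inner products), let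
`Φ : H → N` be a surjective bounded linear operator and `η ∈ H'`.  Then the saddle
point system `I u + Φ' λ = η`, `Φ u = 0` (with `λ ∈ N'` represented by an element of
`N`) has a unique solution `(u, λ)`, and `u` is the `I`-orthogonal projection of the
gradient onto `ker Φ`, i.e. `⟨η, w⟩ = ⟨I u, w⟩` for all `w ∈ ker Φ`. -/
theorem saddle_point_projected_gradient {H N : Type*}
    [NormedAddCommGroup H] [InnerProductSpace ℝ H] [CompleteSpace H]
    [NormedAddCommGroup N] [InnerProductSpace ℝ N] [CompleteSpace N]
    (Φ : H →L[ℝ] N) (hΦ : Function.Surjective Φ)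
    (η : StrongDual ℝ H) :
    ∃! p : H × N,
      (∀ w : H, (inner ℝ p.1 w : ℝ) + (inner ℝ p.2 (Φ w) : ℝ) = η w) ∧
      Φ p.1 = 0 ∧
      (∀ w ∈ LinearMap.ker (Φ : H →ₗ[ℝ] N), η w = (inner ℝ p.1 w : ℝ)) := by
  classical
  set K : Submodule ℝ H := LinearMap.ker (Φ : H →ₗ[ℝ] N) with hK
  haveI : CompleteSpace K := Φ.isClosed_ker.completeSpace_coe
  set y : H := (InnerProductSpace.toDual ℝ H).symm η with hy
  have hηy : ∀ w, η w = (inner ℝ y w : ℝ) := by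
    intro w
    rw [hy, InnerProductSpace.toDual_symm_apply]
  set f : Kᗮ →L[ℝ] N := Φ.comp Kᗮ.subtypeL with hf
  have hinj : LinearMap.ker (f : Kᗮ →ₗ[ℝ] N) = ⊥ := by
    rw [Submodule.eq_bot_iff]
    intro a hab
    have hab' : f a = 0 := LinearMap.mem_ker.mp hab
    have ha : (a : H) ∈ K := by
      simpa [hK, hf] using hab'
    have : (a : H) = 0 := by
      have := Submodule.inner_right_of_mem_orthogonal ha a.2
      simpa [inner_self_eq_zero] using this
    exact Subtype.ext this
  have hsurj : LinearMap.range (f : Kᗮ →ₗ[ℝ] N) = ⊤ := by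
    rw [LinearMap.range_eq_top]
    intro n
    obtain ⟨x, hx⟩ := hΦ n
    refine ⟨⟨x - (K.orthogonalProjection x : H),
      Submodule.sub_starProjection_mem_orthogonal (K := K) x⟩, ?_⟩
    have hxm : ((K.orthogonalProjection x : H)) ∈ K := (K.orthogonalProjection x).2
    simp only [hf, ContinuousLinearMap.coe_coe, ContinuousLinearMap.comp_apply, Submodule.subtypeL_apply, map_sub]
    rw [show Φ _ = 0 from LinearMap.mem_ker.mp hxm]
    simpa using hx
  set e : Kᗮ ≃L[ℝ] N := ContinuousLinearEquiv.ofBijective f hinj hsurj with he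
  set u : H := (K.orthogonalProjection y : H) with hu
  have huK : u ∈ K := (K.orthogonalProjection y).2
  set vK : Kᗮ := ⟨y - u, Submodule.sub_starProjection_mem_orthogonal (K := K) y⟩ with hvK
  set lam : N := ContinuousLinearMap.adjoint (e.symm : N →L[ℝ] Kᗮ) vK with hlam
  -- key computation
  have key : ∀ w : H, (inner ℝ u w : ℝ) + (inner ℝ lam (Φ w) : ℝ) = η w := by
    intro w
    set wK : H := (K.orthogonalProjection w : H) with hwK
    have hwKm : wK ∈ K := (K.orthogonalProjection w).2
    set wP : Kᗮ := ⟨w - wK, Submodule.sub_starProjection_mem_orthogonal (K := K) w⟩ with hwP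
    have hΦw : Φ w = e wP := by
      have : e wP = f wP := rfl
      rw [this]
      simp only [hf, ContinuousLinearMap.comp_apply, Submodule.subtypeL_apply, hwP, map_sub]
      rw [show Φ _ = 0 from LinearMap.mem_ker.mp hwKm]
      simp
    have hlamΦ : (inner ℝ lam (Φ w) : ℝ) = (inner ℝ (y - u) ((w - wK : H)) : ℝ) := by
      rw [hΦw, hlam, ContinuousLinearMap.adjoint_inner_left]
      have : (e.symm : N →L[ℝ] Kᗮ) (e wP) = wP := e.symm_apply_apply wP
      rw [this]
      rfl
    have hcross : (inner ℝ ((y - u : H)) wK : ℝ) = 0 := by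
      have := Submodule.inner_right_of_mem_orthogonal hwKm vK.2
      simpa [hvK, real_inner_comm] using this
    rw [hlamΦ, hηy w, inner_sub_left, inner_sub_right, inner_sub_right]
    have h2 : (inner ℝ y wK : ℝ) - (inner ℝ u wK : ℝ) = 0 := by
      have := hcross
      rw [inner_sub_left] at this
      linarith
    ring_nf
    linarith [h2]
  have hΦu : Φ u = 0 := LinearMap.mem_ker.mp huK
  refine ⟨⟨u, lam⟩, ⟨key, hΦu, ?_⟩, ?_⟩
  · intro w hw
    have := key w
    rw [show Φ _ = 0 from LinearMap.mem_ker.mp hw] at this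
    simpa using this.symm
  · rintro ⟨u', lam'⟩ ⟨h1, h2, h3⟩
    have hu'K : u' ∈ K := LinearMap.mem_ker.mpr h2
    have huu : u' = u := by
      have hz : ∀ w ∈ K, (inner ℝ (u' - u) w : ℝ) = 0 := by
        intro w hw
        have e1 : η w = (inner ℝ u' w : ℝ) := h3 w hw
        have e2 : η w = (inner ℝ u w : ℝ) := by
          have := key w
          rw [show Φ _ = 0 from LinearMap.mem_ker.mp hw] at this
          simpa using this.symm
        rw [inner_sub_left]
        linarith [e1, e2]
      have := hz (u' - u) (sub_mem hu'K huK)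
      have h0 : u' - u = 0 := by rwa [inner_self_eq_zero] at this
      exact sub_eq_zero.mp h0
    subst huu
    have hlameq : lam' = lam := by
      have hz : ∀ n : N, (inner ℝ (lam' - lam) n : ℝ) = 0 := by
        intro n
        obtain ⟨w, hw⟩ := hΦ n
        have e1 := h1 w
        have e2 := key w
        rw [← hw, inner_sub_left]
        simp only at e1
        linarith [e1, e2]
      have := hz (lam' - lam)
      rw [inner_self_eq_zero] at this
      exact sub_eq_zero.mp this
    rw [hlameq]
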